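/- Let p be a prime and S a finite p-group. If A, B ∈ 𝕎(S), then ⁅a,b⁆ = 1 for all a ∈ A and b ∈ B. Consequently W(S) is an elementary abelian normal subgroup of S. -/

import Mathlib

open scoped commutatorElement

/-- The set `𝕎(S)` of elementary abelian normal subgroups `A` of `S` such that for every
`s ∈ S`, if `⁅⁅a,s⁆,s⁆ = 1` for all `a ∈ A` then `⁅a,s⁆ = 1` for all `a ∈ A`. -/
def WSet (p : ℕ) (S : Type*) [Group S] : Set (Subgroup S) :=
  {A | A.Normal ∧ (∀ a ∈ A, ∀ b ∈ A, a * b = b * a) ∧ (∀ a ∈ A, a ^ p = 1) ∧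
    ∀ s : S, (∀ a ∈ A, ⁅⁅a, s⁆, s⁆ = 1) → ∀ a ∈ A, ⁅a, s⁆ = 1}

/-- `W(S)`, the subgroup of `S` generated by all members of `𝕎(S)`. -/
def Wsub (p : ℕ) (S : Type*) [Group S] : Subgroup S :=
  sSup (WSet p S)

/-- For a prime `p` and a finite `p`-group `S`: any two members of `𝕎(S)` commute elementwise;
consequently `W(S)` is an elementary abelian normal subgroup of `S`. -/
theorem Wsub_elementaryAbelian_normal (p : ℕ) (hp : p.Prime) (S : Type*) [Group S] [Finite S]
    (hS : IsPGroup p S) :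
    (∀ A ∈ WSet p S, ∀ B ∈ WSet p S, ∀ a ∈ A, ∀ b ∈ B, ⁅a, b⁆ = 1) ∧
    (Wsub p S).Normal ∧
    (∀ a ∈ Wsub p S, ∀ b ∈ Wsub p S, a * b = b * a) ∧
    (∀ a ∈ Wsub p S, a ^ p = 1) := by
  -- Part 1: members of 𝕎(S) commute elementwise.
  have key : ∀ A ∈ WSet p S, ∀ B ∈ WSet p S, ∀ a ∈ A, ∀ b ∈ B, ⁅a, b⁆ = 1 := by
    rintro A ⟨hAn, hAab, hAp, hAw⟩ B ⟨hBn, hBab, hBp, hBw⟩ a ha b hb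
    -- For any a' ∈ A, ⁅a', b⁆ ∈ B since B is normal.
    have hmemB : ∀ a' ∈ A, ⁅a', b⁆ ∈ B := by
      intro a' _
      have h1 : a' * b * a'⁻¹ ∈ B := hBn.conj_mem b hb a'
      have : ⁅a', b⁆ = (a' * b * a'⁻¹) * b⁻¹ := by
        simp [commutatorElement_def, mul_assoc]
      rw [this]
      exact mul_mem h1 (inv_mem hb)
    -- Hence ⁅⁅a', b⁆, b⁆ = 1 since B is abelian.
    have hcomm : ∀ a' ∈ A, ⁅⁅a', b⁆, b⁆ = 1 := by
      intro a' ha'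
      rw [commutatorElement_eq_one_iff_mul_comm]
      exact hBab _ (hmemB a' ha') b hb
    exact hAw b hcomm a ha
  -- The generating set for W(S).
  set U : Set S := ⋃ A ∈ WSet p S, (A : Set S) with hU
  have hWsub : Wsub p S = Subgroup.closure U := by
    apply le_antisymm
    · apply sSup_le
      intro A hA
      intro x hx
      exact Subgroup.subset_closure (Set.mem_biUnion hA hx)
    · rw [Subgroup.closure_le]
      intro x hx
      rcases Set.mem_iUnion₂.mp hx with ⟨A, hA, hxA⟩
      exact Subgroup.mem_sSup_of_mem hA hxA
  -- Generators commute pairwise.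
  have hUcomm : ∀ x ∈ U, ∀ y ∈ U, x * y = y * x := by
    intro x hx y hy
    rcases Set.mem_iUnion₂.mp hx with ⟨A, hA, hxA⟩
    rcases Set.mem_iUnion₂.mp hy with ⟨B, hB, hyB⟩
    exact commutatorElement_eq_one_iff_mul_comm.mp (key A hA B hB x hxA y hyB)
  -- Commutativity of W(S).
  have habelian : ∀ a ∈ Wsub p S, ∀ b ∈ Wsub p S, a * b = b * a := by
    rw [hWsub]
    intro a ha b hb
    induction ha, hb using Subgroup.closure_induction₂ with
    | mem x y hx hy => exact hUcomm x hx y hy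
    | one_left x hx => simp
    | one_right x hx => simp
    | mul_left x y z hx hy hz h1 h2 => rw [mul_assoc, h2, ← mul_assoc, h1, mul_assoc]
    | mul_right y z x hy hz hx h1 h2 => rw [← mul_assoc, h1, mul_assoc, h2, ← mul_assoc]
    | inv_left x y hx hy h => exact (Commute.inv_left h).eq
    | inv_right x y hx hy h => exact (Commute.inv_right h).eq
  -- Normality of W(S).
  have hnormal : (Wsub p S).Normal := by
    constructor
    intro n hn g
    rw [hWsub] at hn ⊢
    induction hn using Subgroup.closure_induction with
    | mem x hx =>
        rcases Set.mem_iUnion₂.mp hx with ⟨A, hA, hxA⟩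
        exact Subgroup.subset_closure (Set.mem_biUnion hA (hA.1.conj_mem x hxA g))
    | one => simpa using one_mem _
    | mul x y hx hy ihx ihy =>
        have : g * (x * y) * g⁻¹ = (g * x * g⁻¹) * (g * y * g⁻¹) := by group
        rw [this]; exact mul_mem ihx ihy
    | inv x hx ihx =>
        have : g * x⁻¹ * g⁻¹ = (g * x * g⁻¹)⁻¹ := by group
        rw [this]; exact inv_mem ihx
  -- Exponent p.
  have hexp : ∀ a ∈ Wsub p S, a ^ p = 1 := by
    intro a ha
    have ha' := ha
    rw [hWsub] at ha'
    induction ha' using Subgroup.closure_induction with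
    | mem x hx =>
        rcases Set.mem_iUnion₂.mp hx with ⟨A, hA, hxA⟩
        exact hA.2.2.1 x hxA
    | one => simp
    | mul x y hx hy ihx ihy =>
        have hxW : x ∈ Wsub p S := by rw [hWsub]; exact hx
        have hyW : y ∈ Wsub p S := by rw [hWsub]; exact hy
        have hc : Commute x y := habelian x hxW y hyW
        rw [hc.mul_pow, ihx hxW, ihy hyW, one_mul]
    | inv x hx ihx =>
        have hxW : x ∈ Wsub p S := by rw [hWsub]; exact hx
        rw [inv_pow, ihx hxW, inv_one]
  exact ⟨key, hnormal, habelian, hexp⟩
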